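/- Let q be a prime power, ℓ ≤ m be positive integers, and 1 ≤ t ≤ ℓ. If F, F' ∈ Mat_{ℓ×m}(F_q) have the same rank, then the number of matrices M ∈ Mat_{ℓ×m}(F_q) with rank(M) ≤ t and trace(Fᵀ M) ≠ 0 equals the number of matrices M ∈ Mat_{ℓ×m}(F_q) with rank(M) ≤ t and trace(F'ᵀ M) ≠ 0. In other words, the Hamming weight of a codeword of the determinantal code C(t;ℓ,m) depends only on the rank of the coefficient matrix of the corresponding linear form. -/

import Mathlib

open Matrix

private lemma exists_linearEquiv_comp {K V W : Type*} [Field K]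
    [AddCommGroup V] [Module K V] [AddCommGroup W] [Module K W]
    [FiniteDimensional K V] [FiniteDimensional K W]
    (f f' : V →ₗ[K] W)
    (h : Module.finrank K (LinearMap.range f) = Module.finrank K (LinearMap.range f')) :
    ∃ (e₁ : W ≃ₗ[K] W) (e₂ : V ≃ₗ[K] V),
      f' = e₁.toLinearMap ∘ₗ f ∘ₗ e₂.toLinearMap := by
  classical
  obtain ⟨C, hC⟩ := Submodule.exists_isCompl (LinearMap.ker f)
  obtain ⟨C', hC'⟩ := Submodule.exists_isCompl (LinearMap.ker f')
  obtain ⟨D, hD⟩ := Submodule.exists_isCompl (LinearMap.range f)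
  obtain ⟨D', hD'⟩ := Submodule.exists_isCompl (LinearMap.range f')
  -- restriction isos
  have mkinj : ∀ (g : V →ₗ[K] W) (P : Submodule K V), IsCompl (LinearMap.ker g) P →
      Function.Injective (g.domRestrict P) := by
    intro g P hP x y hxy
    have : (x : V) - (y : V) ∈ LinearMap.ker g := by
      simp only [LinearMap.mem_ker, map_sub]
      simp only [LinearMap.domRestrict_apply] at hxy
      rw [hxy, sub_self]
    have hmem : (x : V) - (y : V) ∈ P := P.sub_mem x.2 y.2
    have h0 : (x : V) - (y : V) = 0 := by
      have := Submodule.disjoint_def.mp hP.disjoint _ this hmem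
      exact this
    exact Subtype.ext (sub_eq_zero.mp h0)
  have mkrange : ∀ (g : V →ₗ[K] W) (P : Submodule K V), IsCompl (LinearMap.ker g) P →
      LinearMap.range (g.domRestrict P) = LinearMap.range g := by
    intro g P hP
    rw [LinearMap.range_domRestrict]
    have hker : Submodule.map g (LinearMap.ker g) = ⊥ := by
      ext x
      simp only [Submodule.mem_map, LinearMap.mem_ker, Submodule.mem_bot]
      constructor
      · rintro ⟨y, hy, rfl⟩; exact hy
      · rintro rfl; exact ⟨0, map_zero g, map_zero g⟩
    rw [LinearMap.range_eq_map, ← hP.sup_eq_top, Submodule.map_sup, hker, bot_sup_eq]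
  have hinj := mkinj f C hC
  have hinj' := mkinj f' C' hC'
  let isoC : C ≃ₗ[K] LinearMap.range f :=
    (LinearEquiv.ofInjective (f.domRestrict C) hinj).trans
      (LinearEquiv.ofEq _ _ (mkrange f C hC))
  let isoC' : C' ≃ₗ[K] LinearMap.range f' :=
    (LinearEquiv.ofInjective (f'.domRestrict C') hinj').trans
      (LinearEquiv.ofEq _ _ (mkrange f' C' hC'))
  have isoC_apply : ∀ c : C, (isoC c : W) = f c := fun c => rfl
  have isoC'_apply : ∀ c : C', (isoC' c : W) = f' c := fun c => rfl
  -- finrank facts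
  have hCr : Module.finrank K C = Module.finrank K (LinearMap.range f) := isoC.finrank_eq
  have hCr' : Module.finrank K C' = Module.finrank K (LinearMap.range f') := isoC'.finrank_eq
  have rn : Module.finrank K (LinearMap.range f) + Module.finrank K (LinearMap.ker f)
      = Module.finrank K V := LinearMap.finrank_range_add_finrank_ker f
  have rn' : Module.finrank K (LinearMap.range f') + Module.finrank K (LinearMap.ker f')
      = Module.finrank K V := LinearMap.finrank_range_add_finrank_ker f'
  have hDr : Module.finrank K (LinearMap.range f) + Module.finrank K D
      = Module.finrank K W := Submodule.finrank_add_eq_of_isCompl hD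
  have hDr' : Module.finrank K (LinearMap.range f') + Module.finrank K D'
      = Module.finrank K W := Submodule.finrank_add_eq_of_isCompl hD'
  let e : C ≃ₗ[K] C' := LinearEquiv.ofFinrankEq _ _ (by omega)
  let eK : LinearMap.ker f ≃ₗ[K] LinearMap.ker f' := LinearEquiv.ofFinrankEq _ _ (by omega)
  let eD : D ≃ₗ[K] D' := LinearEquiv.ofFinrankEq _ _ (by omega)
  let ψ : LinearMap.range f ≃ₗ[K] LinearMap.range f' := isoC.symm.trans (e.trans isoC')
  let e₂ : V ≃ₗ[K] V :=
    (Submodule.prodEquivOfIsCompl C' (LinearMap.ker f') hC'.symm).symm.trans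
      ((e.symm.prodCongr eK.symm).trans (Submodule.prodEquivOfIsCompl C (LinearMap.ker f) hC.symm))
  let e₁ : W ≃ₗ[K] W :=
    (Submodule.prodEquivOfIsCompl (LinearMap.range f) D hD).symm.trans
      ((ψ.prodCongr eD).trans (Submodule.prodEquivOfIsCompl (LinearMap.range f') D' hD'))
  refine ⟨e₁, e₂, ?_⟩
  -- key computations
  have e₂_ker : ∀ k : LinearMap.ker f', e₂ (k : V) = (eK.symm k : V) := by
    intro k
    simp only [e₂, LinearEquiv.trans_apply,
      Submodule.prodEquivOfIsCompl_symm_apply_right, LinearEquiv.prodCongr_apply, map_zero,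
      Submodule.coe_prodEquivOfIsCompl', Submodule.coe_zero, zero_add]
  have e₂_C : ∀ c : C', e₂ (c : V) = (e.symm c : V) := by
    intro c
    simp only [e₂, LinearEquiv.trans_apply,
      Submodule.prodEquivOfIsCompl_symm_apply_left, LinearEquiv.prodCongr_apply, map_zero,
      Submodule.coe_prodEquivOfIsCompl', Submodule.coe_zero, add_zero]
  have e₁_range : ∀ y : LinearMap.range f, e₁ (y : W) = (ψ y : W) := by
    intro y
    simp only [e₁, LinearEquiv.trans_apply,
      Submodule.prodEquivOfIsCompl_symm_apply_left, LinearEquiv.prodCongr_apply, map_zero,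
      Submodule.coe_prodEquivOfIsCompl', Submodule.coe_zero, add_zero]
  apply LinearMap.ext
  intro x
  have hx : x ∈ LinearMap.ker f' ⊔ C' := by rw [hC'.sup_eq_top]; trivial
  obtain ⟨k, hk, c, hc, rfl⟩ := Submodule.mem_sup.mp hx
  simp only [LinearMap.comp_apply, LinearEquiv.coe_coe, map_add]
  have hk0 : e₁ (f (e₂ k)) = 0 := by
    have h' : e₂ k = ((eK.symm ⟨k, hk⟩ : LinearMap.ker f) : V) := e₂_ker ⟨k, hk⟩
    rw [h']
    have : f ((eK.symm ⟨k, hk⟩ : LinearMap.ker f) : V) = 0 :=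
      LinearMap.mem_ker.mp (eK.symm ⟨k, hk⟩).2
    rw [this, map_zero]
  have hc1 : e₁ (f (e₂ c)) = f' c := by
    have h' : e₂ c = ((e.symm ⟨c, hc⟩ : C) : V) := e₂_C ⟨c, hc⟩
    rw [h']
    have hfc : f ((e.symm ⟨c, hc⟩ : C) : V) = (isoC (e.symm ⟨c, hc⟩) : W) :=
      (isoC_apply _).symm
    rw [hfc]
    have h'' : e₁ ((isoC (e.symm ⟨c, hc⟩) : W)) = (ψ (isoC (e.symm ⟨c, hc⟩)) : W) :=
      e₁_range _
    rw [h'']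
    simp only [ψ, LinearEquiv.trans_apply, LinearEquiv.symm_apply_apply,
      LinearEquiv.apply_symm_apply]
    exact isoC'_apply ⟨c, hc⟩
  simp [LinearMap.mem_ker.mp hk, hk0, hc1]

private lemma exists_units_factorization {K : Type*} [Field K] {ℓ m : ℕ}
    (F F' : Matrix (Fin ℓ) (Fin m) K) (hrk : F.rank = F'.rank) :
    ∃ (A : Matrix (Fin ℓ) (Fin ℓ) K) (B : Matrix (Fin m) (Fin m) K),
      IsUnit A.det ∧ IsUnit B.det ∧ F' = A * F * B := by
  classical
  obtain ⟨e₁, e₂, hcomp⟩ := exists_linearEquiv_comp F.mulVecLin F'.mulVecLin hrk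
  refine ⟨LinearMap.toMatrix' e₁.toLinearMap, LinearMap.toMatrix' e₂.toLinearMap, ?_, ?_, ?_⟩
  · have h1 : LinearMap.toMatrix' e₁.toLinearMap * LinearMap.toMatrix' e₁.symm.toLinearMap
        = 1 := by
      rw [← LinearMap.toMatrix'_comp]
      simp [LinearMap.toMatrix'_id]
    exact Matrix.isUnit_det_of_right_inverse h1
  · have h1 : LinearMap.toMatrix' e₂.toLinearMap * LinearMap.toMatrix' e₂.symm.toLinearMap
        = 1 := by
      rw [← LinearMap.toMatrix'_comp]
      simp [LinearMap.toMatrix'_id]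
    exact Matrix.isUnit_det_of_right_inverse h1
  · have := congrArg LinearMap.toMatrix' hcomp
    rw [LinearMap.toMatrix'_comp, LinearMap.toMatrix'_comp] at this
    rw [← Matrix.toLin'_apply', LinearMap.toMatrix'_toLin'] at this
    rw [show F.mulVecLin = Matrix.toLin' F from (Matrix.toLin'_apply' F).symm,
      LinearMap.toMatrix'_toLin'] at this
    rw [this, Matrix.mul_assoc]

/-- The Hamming weight of a codeword of the determinantal code `C(t; ℓ, m)` depends only on
the rank of the coefficient matrix: if `F` and `F'` have the same rank, then the number of
matrices `M` of rank at most `t` with `trace (Fᵀ * M) ≠ 0` is the same for `F` and `F'`. -/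
theorem det_code_weight_rank_invariant (K : Type*) [Field K] [Fintype K] (q ℓ m t : ℕ)
    (hq : Fintype.card K = q) (hℓ : 0 < ℓ) (hℓm : ℓ ≤ m) (ht1 : 1 ≤ t) (htℓ : t ≤ ℓ)
    (F F' : Matrix (Fin ℓ) (Fin m) K) (hrk : F.rank = F'.rank) :
    Nat.card {M : Matrix (Fin ℓ) (Fin m) K // M.rank ≤ t ∧ Matrix.trace (Fᵀ * M) ≠ 0} =
      Nat.card {M : Matrix (Fin ℓ) (Fin m) K // M.rank ≤ t ∧ Matrix.trace (F'ᵀ * M) ≠ 0} := by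
  classical
  obtain ⟨A, B, hA, hB, rfl⟩ := exists_units_factorization F F' hrk
  have hAT : IsUnit Aᵀ.det := by rwa [Matrix.det_transpose]
  have hBT : IsUnit Bᵀ.det := by rwa [Matrix.det_transpose]
  let ε : Matrix (Fin ℓ) (Fin m) K ≃ Matrix (Fin ℓ) (Fin m) K :=
  { toFun := fun M => Aᵀ * M * Bᵀ
    invFun := fun N => Aᵀ⁻¹ * N * Bᵀ⁻¹
    left_inv := by
      intro M
      show Aᵀ⁻¹ * (Aᵀ * M * Bᵀ) * Bᵀ⁻¹ = M
      rw [Matrix.mul_assoc (Aᵀ⁻¹), Matrix.mul_nonsing_inv_cancel_right _ _ hBT,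
        Matrix.nonsing_inv_mul_cancel_left _ _ hAT]
    right_inv := by
      intro N
      show Aᵀ * (Aᵀ⁻¹ * N * Bᵀ⁻¹) * Bᵀ = N
      rw [Matrix.mul_assoc Aᵀ, Matrix.nonsing_inv_mul_cancel_right _ _ hBT,
        Matrix.mul_nonsing_inv_cancel_left _ _ hAT] }
  symm
  apply Nat.card_congr
  refine Equiv.subtypeEquiv ε ?_
  intro M
  have hrank : (Aᵀ * M * Bᵀ).rank = M.rank := by
    rw [Matrix.rank_mul_eq_left_of_isUnit_det Bᵀ _ hBT,
      Matrix.rank_mul_eq_right_of_isUnit_det Aᵀ M hAT]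
  have htr : Matrix.trace (Fᵀ * (Aᵀ * M * Bᵀ)) = Matrix.trace ((A * F * B)ᵀ * M) := by
    rw [Matrix.transpose_mul, Matrix.transpose_mul]
    rw [show Fᵀ * (Aᵀ * M * Bᵀ) = (Fᵀ * Aᵀ * M) * Bᵀ by
      simp only [Matrix.mul_assoc]]
    rw [Matrix.trace_mul_comm]
    simp only [Matrix.mul_assoc]
  constructor
  · rintro ⟨h1, h2⟩
    exact ⟨by simpa [ε, hrank], by simpa [ε, htr] using h2⟩
  · rintro ⟨h1, h2⟩
    refine ⟨?_, ?_⟩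
    · rw [show (ε M : Matrix (Fin ℓ) (Fin m) K) = Aᵀ * M * Bᵀ from rfl, hrank] at h1
      exact h1
    · rw [show (ε M : Matrix (Fin ℓ) (Fin m) K) = Aᵀ * M * Bᵀ from rfl, htr] at h2
      exact h2
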